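/- In any information frame, the strong cut rule holds: for all tokens a, i, j, all X ∈ Con_i and Y ∈ Con_j, if X ⊢_i ({j} ∪ Y) and Y ⊢_j a, then X ⊢_i a. -/
import Mathlib


/-- The data `(Con, Ent)` on token set `A` forms an information frame.
`Con i` is the set of finite sets of tokens consistent with `i`, and
`Ent i X a` means `X ⊢ᵢ a`.  The accessibility relation is `i R j ↔ {i} ∈ Con j`. -/
structure IsInfoFrame {A : Type*} [DecidableEq A]
    (Con : A → Set (Finset A)) (Ent : A → Finset A → A → Prop) : Prop where
  self_con : ∀ i : A, ({i} : Finset A) ∈ Con i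
  con_down : ∀ (i : A) (X Y : Finset A), Y ⊆ X → X ∈ Con i → Y ∈ Con i
  sound : ∀ (i : A) (X Y : Finset A), X ∈ Con i → (∀ b ∈ Y, Ent i X b) → Y ∈ Con i
  weaken : ∀ (i : A) (X Y : Finset A) (a : A),
    X ∈ Con i → Y ∈ Con i → X ⊆ Y → Ent i X a → Ent i Y a
  cut : ∀ (i : A) (X Y : Finset A) (a : A),
    X ∈ Con i → (∀ b ∈ Y, Ent i X b) → Ent i Y a → Ent i X a
  con_transfer : ∀ i j : A, ({i} : Finset A) ∈ Con j → Con i ⊆ Con j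
  ent_transfer : ∀ (i j : A) (X : Finset A) (a : A),
    ({i} : Finset A) ∈ Con j → X ∈ Con i → Ent i X a → Ent j X a
  interp : ∀ (i : A) (X Y : Finset A), X ∈ Con i → (∀ b ∈ Y, Ent i X b) →
    ∃ (e : A) (Z : Finset A), Z ∈ Con e ∧ (∀ b ∈ insert e Z, Ent i X b) ∧
      (∀ b ∈ Y, Ent e Z b)

/-- Finite consistency of a subset `x` of tokens. -/
def FinConsistent {A : Type*} (Con : A → Set (Finset A)) (x : Set A) : Prop :=
  ∀ F : Finset A, ↑F ⊆ x → ∃ i ∈ x, F ∈ Con i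

/-- Closure of `x` under entailment. -/
def EntClosed {A : Type*} (Con : A → Set (Finset A))
    (Ent : A → Finset A → A → Prop) (x : Set A) : Prop :=
  ∀ i ∈ x, ∀ X : Finset A, ↑X ⊆ x → X ∈ Con i → ∀ a : A, Ent i X a → a ∈ x

/-- Completeness of `x`. -/
def EntComplete {A : Type*} (Con : A → Set (Finset A))
    (Ent : A → Finset A → A → Prop) (x : Set A) : Prop :=
  ∀ a ∈ x, ∃ i ∈ x, ∃ X : Finset A, ↑X ⊆ x ∧ X ∈ Con i ∧ Ent i X a

/-- A (global) state of an information frame. -/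
def IsState {A : Type*} (Con : A → Set (Finset A))
    (Ent : A → Finset A → A → Prop) (x : Set A) : Prop :=
  FinConsistent Con x ∧ EntClosed Con Ent x ∧ EntComplete Con Ent x

theorem stmt6 {A : Type*} [DecidableEq A] (Con : A → Set (Finset A))
    (Ent : A → Finset A → A → Prop) (hF : IsInfoFrame Con Ent)
    (a i j : A) (X Y : Finset A) (hX : X ∈ Con i) (hY : Y ∈ Con j)
    (h1 : ∀ b ∈ insert j Y, Ent i X b) (h2 : Ent j Y a) : Ent i X a := by
  obtain ⟨e, Z, hZ, hXeZ, hZjY⟩ := hF.interp i X (insert j Y) hX h1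
  have hje : ({j} : Finset A) ∈ Con e :=
    hF.sound e Z {j} hZ (by simpa using hZjY j (Finset.mem_insert_self j Y))
  have heYa : Ent e Y a := hF.ent_transfer j e Y a hje hY h2
  have hYe : Y ∈ Con e := hF.con_transfer j e hje hY
  have heZa : Ent e Z a :=
    hF.cut e Z Y a hZ (fun b hb => hZjY b (Finset.mem_insert_of_mem hb)) heYa
  have heZCon : insert e Z ∈ Con i := hF.sound i X (insert e Z) hX hXeZ
  have hei : ({e} : Finset A) ∈ Con i :=
    hF.con_down i (insert e Z) {e} (by simp) heZCon
  have hiZa : Ent i Z a := hF.ent_transfer e i Z a hei hZ heZa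
  exact hF.cut i X Z a hX (fun b hb => hXeZ b (Finset.mem_insert_of_mem hb)) hiZa
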